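/- Let (V; f, g) be a dual-modular instance with density vector ρ* from the density decomposition. For an allocation (x, y) ∈ B≥_f × B≤_g the following are equivalent: (i) for all v ∈ V the induced density x_v/y_v equals ρ*_v; (ii) (x, y) is lexicographically optimal; (iii) (x, y) is locally maximin. -/

import Mathlib

open Finset

variable {V : Type*} [Fintype V] [DecidableEq V]

/-- A set function is supermodular. -/
def Supermodular (f : Finset V → ℝ) : Prop :=
  ∀ A B : Finset V, f A + f B ≤ f (A ∩ B) + f (A ∪ B)

/-- A set function is submodular. -/
def Submodular (g : Finset V → ℝ) : Prop :=
  ∀ A B : Finset V, g (A ∩ B) + g (A ∪ B) ≤ g A + g B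

/-- A set function is monotone. -/
def MonotoneFn (f : Finset V → ℝ) : Prop :=
  ∀ A B : Finset V, A ⊆ B → f A ≤ f B

/-- A set function is strictly monotone. -/
def StrictMonoFn (g : Finset V → ℝ) : Prop :=
  ∀ A B : Finset V, A ⊂ B → g A < g B

/-- A dual-modular instance `(V; f, g)`: `f` is a nonnegative monotone supermodular
reward function, `g` is a nonnegative strictly monotone submodular cost function,
both vanishing on the empty set. -/
structure DualModular (f g : Finset V → ℝ) : Prop where
  f_nonneg : ∀ A, 0 ≤ f A
  g_nonneg : ∀ A, 0 ≤ g A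
  f_empty : f ∅ = 0
  g_empty : g ∅ = 0
  f_mono : MonotoneFn f
  g_strictMono : StrictMonoFn g
  f_supermodular : Supermodular f
  g_submodular : Submodular g

/-- Density of a subset. -/
noncomputable def density (f g : Finset V → ℝ) (S : Finset V) : ℝ := f S / g S

/-- Marginal contribution `h(S|A) = h(S ∪ A) - h(A)`. -/
def marginal (h : Finset V → ℝ) (S A : Finset V) : ℝ := h (S ∪ A) - h A

/-- Marginal density `ρ(S|A) = f(S|A)/g(S|A)`. -/
noncomputable def margDensity (f g : Finset V → ℝ) (S A : Finset V) : ℝ :=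
  marginal f S A / marginal g S A

/-- `S_{<i}`: the union of earlier parts in an indexed family. -/
def below {k : ℕ} (S : Fin k → Finset V) (i : Fin k) : Finset V :=
  (Finset.univ.filter (fun j => j < i)).biUnion S

/-- The density decomposition `V = S₁ ∪ … ∪ S_k`: each `S i` is a nonempty maximal
densest subset of the remaining instance with marginal functions. -/
structure IsDensityDecomposition (f g : Finset V → ℝ) {k : ℕ} (S : Fin k → Finset V) :
    Prop where
  nonempty : ∀ i, (S i).Nonempty
  disj : ∀ i, Disjoint (S i) (below S i)
  cover : Finset.univ.biUnion S = (Finset.univ : Finset V)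
  maxDensity : ∀ i, ∀ T : Finset V, T.Nonempty → Disjoint T (below S i) →
    margDensity f g T (below S i) ≤ margDensity f g (S i) (below S i)
  maximal : ∀ i, ∀ T : Finset V, T.Nonempty → Disjoint T (below S i) →
    margDensity f g (S i) (below S i) ≤ margDensity f g T (below S i) → T ⊆ S i

/-- `ρ_i`, the density of the `i`-th component of the decomposition. -/
noncomputable def decompDensity (f g : Finset V → ℝ) {k : ℕ} (S : Fin k → Finset V)
    (i : Fin k) : ℝ :=
  margDensity f g (S i) (below S i)

/-- Membership in the base contrapolymatroid `B≥_f`. -/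
def memBf (f : Finset V → ℝ) (x : V → ℝ) : Prop :=
  (∀ v, 0 ≤ x v) ∧ (∑ v, x v = f Finset.univ) ∧ ∀ A : Finset V, f A ≤ ∑ v ∈ A, x v

/-- Membership in the base polymatroid `B≤_g`. -/
def memBg (g : Finset V → ℝ) (y : V → ℝ) : Prop :=
  (∀ v, 0 ≤ y v) ∧ (∑ v, y v = g Finset.univ) ∧ ∀ A : Finset V, ∑ v ∈ A, y v ≤ g A

/-- An allocation is a pair `(x, y) ∈ B≥_f × B≤_g`. -/
def Allocation (f g : Finset V → ℝ) (x y : V → ℝ) : Prop := memBf f x ∧ memBg g y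

/-- The locally maximin condition for an allocation. -/
def LocallyMaximin (f g : Finset V → ℝ) (x y : V → ℝ) : Prop :=
  ∀ ρ : ℝ, 0 < ρ →
    (∑ v ∈ Finset.univ.filter (fun v => ρ ≤ x v / y v), x v
       = f (Finset.univ.filter (fun v => ρ ≤ x v / y v))) ∧
    (∑ v ∈ Finset.univ.filter (fun v => ρ ≤ x v / y v), y v
       = g (Finset.univ.filter (fun v => ρ ≤ x v / y v)))

/-- The multiset of induced densities, sorted in non-increasing order. -/
noncomputable def sortedDensities (x y : V → ℝ) : List ℝ :=
  ((Finset.univ.val.map (fun v => x v / y v)).sort (· ≤ ·)).reverse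

/-- An allocation is lexicographically optimal if its non-increasingly sorted density
vector is lexicographically minimal among all allocations. -/
def LexOptimal (f g : Finset V → ℝ) (x y : V → ℝ) : Prop :=
  Allocation f g x y ∧
  ∀ x' y' : V → ℝ, Allocation f g x' y' → sortedDensities x y ≤ sortedDensities x' y'

/-- The hockey-stick divergence `HS_γ(x ‖ y)`. -/
noncomputable def HS (γ : ℝ) (x y : V → ℝ) : ℝ := ∑ u, max (x u - γ * y u) 0

/-- The `θ`-divergence `D_θ(x ‖ y) = Σ_u y_u · θ(x_u / y_u)`. -/
noncomputable def Dtheta (θ : ℝ → ℝ) (x y : V → ℝ) : ℝ := ∑ u, y u * θ (x u / y u)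

/-- Permutations of `V`, encoded as bijections to positions `Fin |V|`;
`u ≺_σ v` iff `σ u < σ v`. -/
abbrev Perms (V : Type*) [Fintype V] := V ≃ Fin (Fintype.card V)

/-- `h^σ(u)`: the marginal contribution of `u` given the elements preceding it in `σ`. -/
def permVal (h : Finset V → ℝ) (σ : Perms V) (u : V) : ℝ :=
  h (insert u (Finset.univ.filter (fun w => σ w < σ u))) -
    h (Finset.univ.filter (fun w => σ w < σ u))

/-- A probability distribution on permutations of `V`. -/
def IsDist (p : Perms V → ℝ) : Prop := (∀ σ, 0 ≤ p σ) ∧ ∑ σ, p σ = 1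

/-- `h^p(u) = Σ_σ p_σ · h^σ(u)`. -/
noncomputable def distVal (h : Finset V → ℝ) (p : Perms V → ℝ) (u : V) : ℝ :=
  ∑ σ, p σ * permVal h σ u

/-- The density induced by a solution `(p, q)`. -/
noncomputable def solDensity (f g : Finset V → ℝ) (p q : Perms V → ℝ) (v : V) : ℝ :=
  distVal f p v / distVal g q v

/-- A solution `(p, q)` is locally maximin if whenever `u` has strictly larger induced
density than `v`, every permutation with positive weight puts `u` before `v`. -/
def LocallyMaximinSol (f g : Finset V → ℝ) (p q : Perms V → ℝ) : Prop :=
  ∀ u v : V, solDensity f g p q v < solDensity f g p q u →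
    ∀ σ : Perms V, (0 < p σ ∨ 0 < q σ) → σ u < σ v

/-- The convex-program objective `Φ_θ(p, q) = D_θ(f^p ‖ g^q)`. -/
noncomputable def Phi (θ : ℝ → ℝ) (f g : Finset V → ℝ) (p q : Perms V → ℝ) : ℝ :=
  Dtheta θ (distVal f p) (distVal g q)


namespace MFEaux

noncomputable def SD (m : Multiset ℝ) : List ℝ := m.sort (· ≥ ·)

lemma exists_max : ∀ (A : Multiset ℝ), A ≠ 0 → ∃ a, a ∈ A ∧ ∀ x ∈ A, x ≤ a := by
  intro A
  induction A using Multiset.induction_on with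
  | empty => intro h; exact absurd rfl h
  | cons a s ih =>
    intro _
    by_cases hs : s = 0
    · subst hs; exact ⟨a, Multiset.mem_cons_self a 0, by simp⟩
    · obtain ⟨m, hm, hmax⟩ := ih hs
      refine ⟨max a m, ?_, ?_⟩
      · rcases le_total a m with h | h
        · simp [max_eq_right h, Multiset.mem_cons, hm]
        · simp [max_eq_left h]
      · intro x hx
        rcases Multiset.mem_cons.1 hx with rfl | hx
        · exact le_max_left _ _
        · exact le_trans (hmax x hx) (le_max_right _ _)

lemma SD_cons (a : ℝ) (m : Multiset ℝ) (h : ∀ x ∈ m, x ≤ a) :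
    SD (a ::ₘ m) = a :: SD m :=
  Multiset.sort_cons _ _ _ h

lemma SD_lt_aux (n : ℕ) : ∀ (A B : Multiset ℝ), Multiset.card A = Multiset.card B →
    Multiset.card B = n → ∀ θ : ℝ,
    A.filter (fun x => θ < x) ≤ B.filter (fun x => θ < x) →
    (A.filter (fun x => θ ≤ x)).card < (B.filter (fun x => θ ≤ x)).card →
    List.Lex (· < ·) (SD A) (SD B) := by
  induction n with
  | zero =>
    intro A B hc hB θ _ hcount
    rw [Multiset.card_eq_zero] at hB; subst hB
    simp at hcount
  | succ n ih =>
    intro A B hc hB θ hsub hcount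
    have hBne : B ≠ 0 := by
      intro h; subst h; simp at hB
    have hAne : A ≠ 0 := by
      intro h; subst h
      simp only [Multiset.card_zero] at hc
      exact hBne ((Multiset.card_eq_zero).1 hc.symm)
    obtain ⟨a, haA, hamax⟩ := exists_max A hAne
    obtain ⟨b, hbB, hbmax⟩ := exists_max B hBne
    set A' := A.erase a with hA'
    set B' := B.erase b with hB'
    have hAeq : A = a ::ₘ A' := (Multiset.cons_erase haA).symm
    have hBeq : B = b ::ₘ B' := (Multiset.cons_erase hbB).symm
    have hA'max : ∀ x ∈ A', x ≤ a := fun x hx => hamax x (Multiset.mem_of_mem_erase hx)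
    have hB'max : ∀ x ∈ B', x ≤ b := fun x hx => hbmax x (Multiset.mem_of_mem_erase hx)
    have hSDA : SD A = a :: SD A' := by rw [hAeq]; exact SD_cons a A' hA'max
    have hSDB : SD B = b :: SD B' := by rw [hBeq]; exact SD_cons b B' hB'max
    rw [hSDA, hSDB]
    by_cases hab : a < b
    · exact List.Lex.rel hab
    have hba : a ≤ b := by
      by_cases hθa : θ < a
      · have : a ∈ B.filter (fun x => θ < x) := by
          apply Multiset.mem_of_le hsub
          rw [Multiset.mem_filter]; exact ⟨haA, hθa⟩
        exact hbmax a (Multiset.mem_of_mem_filter this)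
      · push_neg at hθa
        have : ∃ x ∈ B, θ ≤ x := by
          by_contra hno
          push_neg at hno
          have : B.filter (fun x => θ ≤ x) = 0 := by
            rw [Multiset.filter_eq_nil]
            intro x hx; exact not_le.2 (hno x hx)
          rw [this] at hcount; simp at hcount
        obtain ⟨x, hxB, hθx⟩ := this
        exact le_trans hθa (le_trans hθx (hbmax x hxB))
    have habe : a = b := le_antisymm hba (not_lt.1 hab)
    subst habe
    apply List.Lex.cons
    have hcard' : Multiset.card A' = Multiset.card B' := by
      have := hc
      rw [hAeq, hBeq] at this
      simpa using this
    have hcardB' : Multiset.card B' = n := by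
      have := hB
      rw [hBeq] at this
      simpa using this
    by_cases hθa : θ < a
    · have hfA : A.filter (fun x => θ < x) = a ::ₘ A'.filter (fun x => θ < x) := by
        rw [hAeq, Multiset.filter_cons, if_pos hθa]; simp
      have hfB : B.filter (fun x => θ < x) = a ::ₘ B'.filter (fun x => θ < x) := by
        rw [hBeq, Multiset.filter_cons, if_pos hθa]; simp
      have hfA2 : A.filter (fun x => θ ≤ x) = a ::ₘ A'.filter (fun x => θ ≤ x) := by
        rw [hAeq, Multiset.filter_cons, if_pos (le_of_lt hθa)]; simp
      have hfB2 : B.filter (fun x => θ ≤ x) = a ::ₘ B'.filter (fun x => θ ≤ x) := by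
        rw [hBeq, Multiset.filter_cons, if_pos (le_of_lt hθa)]; simp
      rw [hfA, hfB] at hsub
      rw [hfA2, hfB2] at hcount
      simp only [Multiset.card_cons] at hcount
      exact ih A' B' hcard' hcardB' θ ((Multiset.cons_le_cons_iff a).1 hsub)
        (by omega)
    · push_neg at hθa
      have hθa' : θ = a := by
        have : ∃ x ∈ B, θ ≤ x := by
          by_contra hno
          push_neg at hno
          have : B.filter (fun x => θ ≤ x) = 0 := by
            rw [Multiset.filter_eq_nil]
            intro x hx; exact not_le.2 (hno x hx)
          rw [this] at hcount; simp at hcount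
        obtain ⟨x, hxB, hθx⟩ := this
        exact le_antisymm (le_trans hθx (hbmax x hxB)) hθa
      subst hθa'
      have hfA2 : A.filter (fun x => θ ≤ x) = θ ::ₘ A'.filter (fun x => θ ≤ x) := by
        rw [hAeq, Multiset.filter_cons, if_pos (le_refl θ)]; simp
      have hfB2 : B.filter (fun x => θ ≤ x) = θ ::ₘ B'.filter (fun x => θ ≤ x) := by
        rw [hBeq, Multiset.filter_cons, if_pos (le_refl θ)]; simp
      rw [hfA2, hfB2] at hcount
      simp only [Multiset.card_cons] at hcount
      have hfA' : A'.filter (fun x => θ < x) = 0 := by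
        rw [Multiset.filter_eq_nil]
        intro x hx
        exact not_lt.2 (hA'max x hx)
      have hfB' : B'.filter (fun x => θ < x) = 0 := by
        rw [Multiset.filter_eq_nil]
        intro x hx
        exact not_lt.2 (hB'max x hx)
      exact ih A' B' hcard' hcardB' θ (by rw [hfA', hfB']) (by omega)

lemma SD_lt (A B : Multiset ℝ) (hc : Multiset.card A = Multiset.card B) (θ : ℝ)
    (hsub : A.filter (fun x => θ < x) ≤ B.filter (fun x => θ < x))
    (hcount : (A.filter (fun x => θ ≤ x)).card < (B.filter (fun x => θ ≤ x)).card) :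
    List.Lex (· < ·) (SD A) (SD B) :=
  SD_lt_aux (Multiset.card B) A B hc rfl θ hsub hcount

section WithV

variable {V : Type*} [Fintype V] [DecidableEq V]

lemma sortedDensities_eq_SD (x y : V → ℝ) :
    sortedDensities x y = SD (Finset.univ.val.map (fun v => x v / y v)) := by
  unfold sortedDensities SD
  set m := Finset.univ.val.map (fun v : V => x v / y v)
  apply (fun hp h1 h2 => List.Perm.eq_of_pairwise' (r := (· ≥ · : ℝ → ℝ → Prop)) h1 h2 hp)
  · have h1 : (m.sort (· ≤ ·)).reverse.Perm (m.sort (· ≤ ·)) := List.reverse_perm _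
    have h2 : (m.sort (· ≤ ·)).Perm (m.sort (· ≥ ·)) := by
      rw [← Multiset.coe_eq_coe]
      simp [Multiset.sort_eq]
    exact h1.trans h2
  · rw [List.pairwise_reverse]
    have := Multiset.pairwise_sort m (· ≤ · : ℝ → ℝ → Prop)
    convert this using 2
  · exact Multiset.pairwise_sort m _

lemma SD_map_lt (d₁ d₂ : V → ℝ) (θ : ℝ)
    (hsub : Finset.univ.filter (fun v => θ < d₁ v) ⊆ Finset.univ.filter (fun v => θ < d₂ v))
    (hagree : ∀ v ∈ Finset.univ.filter (fun v => θ < d₁ v), d₁ v = d₂ v)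
    (hcount : (Finset.univ.filter (fun v => θ ≤ d₁ v)).card
      < (Finset.univ.filter (fun v => θ ≤ d₂ v)).card) :
    List.Lex (· < ·) (SD (Finset.univ.val.map d₁)) (SD (Finset.univ.val.map d₂)) := by
  have key : ∀ (d : V → ℝ) (p : ℝ → Prop) [DecidablePred p],
      (Finset.univ.val.map d).filter p = (Finset.univ.filter (fun v => p (d v))).val.map d := by
    intro d p hp
    rw [Multiset.filter_map]
    rfl
  apply SD_lt
  · simp
  · rw [key d₁ (fun z => θ < z), key d₂ (fun z => θ < z)]
    calc (Finset.univ.filter (fun v => θ < d₁ v)).val.map d₁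
        = (Finset.univ.filter (fun v => θ < d₁ v)).val.map d₂ :=
          Multiset.map_congr rfl (fun v hv => hagree v hv)
      _ ≤ (Finset.univ.filter (fun v => θ < d₂ v)).val.map d₂ :=
          Multiset.map_le_map (Finset.val_le_iff.2 hsub)
  · rw [key d₁ (fun z => θ ≤ z), key d₂ (fun z => θ ≤ z)]
    rw [Multiset.card_map, Multiset.card_map]
    exact hcount

lemma sorted_lt_of_lex {x y x' y' : V → ℝ}
    (h : List.Lex (· < ·) (SD (Finset.univ.val.map (fun v => x v / y v)))
      (SD (Finset.univ.val.map (fun v => x' v / y' v)))) :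
    sortedDensities x y < sortedDensities x' y' := by
  rw [sortedDensities_eq_SD, sortedDensities_eq_SD]
  exact h

end WithV

section Decomp

variable {V : Type*} [Fintype V] [DecidableEq V]
variable {f g : Finset V → ℝ}

lemma marg_g_pos (hdm : DualModular f g) {T A : Finset V} (hT : T.Nonempty)
    (hd : Disjoint T A) : 0 < g (T ∪ A) - g A := by
  have hss : A ⊂ T ∪ A := by
    obtain ⟨t, ht⟩ := hT
    refine (Finset.ssubset_iff_of_subset Finset.subset_union_right).2 ⟨t, ?_, ?_⟩
    · exact Finset.mem_union_left _ ht
    · exact Finset.disjoint_left.1 hd ht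
  linarith [hdm.g_strictMono A (T ∪ A) hss]

lemma marg_f_nonneg (hdm : DualModular f g) (T A : Finset V) : 0 ≤ f (T ∪ A) - f A := by
  linarith [hdm.f_mono A (T ∪ A) Finset.subset_union_right]

lemma marg_f_mono (hdm : DualModular f g) {T A B : Finset V} (hAB : A ⊆ B)
    (hd : Disjoint T B) : f (T ∪ A) - f A ≤ f (T ∪ B) - f B := by
  have h := hdm.f_supermodular (T ∪ A) B
  have h1 : (T ∪ A) ∩ B = A := by
    rw [Finset.union_inter_distrib_right]
    rw [Finset.inter_eq_left.2 hAB, (Finset.disjoint_iff_inter_eq_empty).1 hd]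
    simp
  have h2 : (T ∪ A) ∪ B = T ∪ B := by
    rw [Finset.union_assoc, Finset.union_eq_right.2 hAB]
  rw [h1, h2] at h
  linarith

lemma y_pos (hdm : DualModular f g) {y : V → ℝ} (hy : memBg g y) (v : V) : 0 < y v := by
  have h1 : ∑ w ∈ Finset.univ.erase v, y w ≤ g (Finset.univ.erase v) := hy.2.2 _
  have h2 : g (Finset.univ.erase v) < g Finset.univ :=
    hdm.g_strictMono _ _ (Finset.erase_ssubset (Finset.mem_univ v))
  have h3 : ∑ w ∈ Finset.univ.erase v, y w + y v = ∑ w, y w :=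
    Finset.sum_erase_add _ _ (Finset.mem_univ v)
  have h4 := hy.2.1
  linarith

-- density rewriting: x v = (x v / y v) * y v
lemma x_eq_density_mul (hdm : DualModular f g) {y : V → ℝ} (hy : memBg g y)
    (x : V → ℝ) (v : V) : x v = (x v / y v) * y v := by
  field_simp [ne_of_gt (y_pos hdm hy v)]

variable {k : ℕ} {S : Fin k → Finset V}

/-- `Pref S j` : union of the first `j` blocks. -/
def Pref (S : Fin k → Finset V) (j : ℕ) : Finset V :=
  (Finset.univ.filter (fun i : Fin k => (i : ℕ) < j)).biUnion S

lemma below_eq_Pref (i : Fin k) : below S i = Pref S i.val := by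
  unfold below Pref
  ext v
  simp only [Finset.mem_biUnion, Finset.mem_filter, Finset.mem_univ, true_and, Fin.lt_def]

lemma mem_Pref {v : V} {j : ℕ} : v ∈ Pref S j ↔ ∃ i : Fin k, (i : ℕ) < j ∧ v ∈ S i := by
  unfold Pref
  simp only [Finset.mem_biUnion, Finset.mem_filter, Finset.mem_univ, true_and]

lemma Pref_zero : Pref S 0 = ∅ := by
  ext v; simp [mem_Pref]

lemma Pref_mono {j j' : ℕ} (h : j ≤ j') : Pref S j ⊆ Pref S j' := by
  intro v hv
  rw [mem_Pref] at hv ⊢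
  obtain ⟨i, hi, hv⟩ := hv
  exact ⟨i, lt_of_lt_of_le hi h, hv⟩

lemma Pref_succ {j : ℕ} (hj : j < k) : Pref S (j + 1) = S ⟨j, hj⟩ ∪ Pref S j := by
  ext v
  rw [Finset.mem_union, mem_Pref, mem_Pref]
  constructor
  · rintro ⟨i, hi, hv⟩
    rcases Nat.lt_succ_iff_lt_or_eq.1 hi with h | h
    · exact Or.inr ⟨i, h, hv⟩
    · left; convert hv using 2; exact (Fin.ext h.symm)
  · rintro (hv | ⟨i, hi, hv⟩)
    · exact ⟨⟨j, hj⟩, Nat.lt_succ_self j, hv⟩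
    · exact ⟨i, Nat.lt_succ_of_lt hi, hv⟩

lemma Pref_top (hdec : IsDensityDecomposition f g S) {j : ℕ} (hj : k ≤ j) :
    Pref S j = Finset.univ := by
  apply Finset.eq_univ_of_forall
  intro v
  have hv : v ∈ Finset.univ.biUnion S := by rw [hdec.cover]; exact Finset.mem_univ v
  rw [Finset.mem_biUnion] at hv
  obtain ⟨i, _, hv⟩ := hv
  exact mem_Pref.2 ⟨i, lt_of_lt_of_le i.isLt hj, hv⟩

lemma S_disj_Pref (hdec : IsDensityDecomposition f g S) (i : Fin k) :
    Disjoint (S i) (Pref S i.val) := by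
  have := hdec.disj i
  rwa [below_eq_Pref] at this

lemma exists_block (hdec : IsDensityDecomposition f g S) (v : V) : ∃ i : Fin k, v ∈ S i := by
  have hv : v ∈ Finset.univ.biUnion S := by rw [hdec.cover]; exact Finset.mem_univ v
  rw [Finset.mem_biUnion] at hv
  obtain ⟨i, _, hv⟩ := hv
  exact ⟨i, hv⟩

lemma block_ge_of_not_mem_Pref (hdec : IsDensityDecomposition f g S) {v : V} {j : ℕ}
    (h : v ∉ Pref S j) {i : Fin k} (hv : v ∈ S i) : j ≤ (i : ℕ) := by
  by_contra hc
  push_neg at hc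
  exact h (mem_Pref.2 ⟨i, hc, hv⟩)

lemma gmarg_pos (hdm : DualModular f g) (hdec : IsDensityDecomposition f g S) (i : Fin k) :
    0 < g (S i ∪ Pref S i.val) - g (Pref S i.val) :=
  marg_g_pos hdm (hdec.nonempty i) (S_disj_Pref hdec i)

lemma rho_nonneg (hdm : DualModular f g) (hdec : IsDensityDecomposition f g S) (i : Fin k) :
    0 ≤ decompDensity f g S i := by
  unfold decompDensity margDensity marginal
  rw [below_eq_Pref]
  exact div_nonneg (marg_f_nonneg hdm _ _) (le_of_lt (gmarg_pos hdm hdec i))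

lemma fmarg_eq (hdm : DualModular f g) (hdec : IsDensityDecomposition f g S) (i : Fin k) :
    f (S i ∪ Pref S i.val) - f (Pref S i.val)
      = decompDensity f g S i * (g (S i ∪ Pref S i.val) - g (Pref S i.val)) := by
  unfold decompDensity margDensity marginal
  rw [below_eq_Pref]
  field_simp [ne_of_gt (gmarg_pos hdm hdec i)]

lemma union_Pref_succ (i : Fin k) : S i ∪ Pref S i.val = Pref S (i.val + 1) := by
  rw [Pref_succ i.isLt]

lemma rho_adj (hdm : DualModular f g) (hdec : IsDensityDecomposition f g S)
    (i : Fin k) (h : i.val + 1 < k) :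
    decompDensity f g S ⟨i.val + 1, h⟩ < decompDensity f g S i := by
  set j : Fin k := ⟨i.val + 1, h⟩ with hjdef
  by_contra hc
  push_neg at hc
  -- hc : decompDensity i ≤ decompDensity j
  set Pi := Pref S i.val with hPi
  have hPj : Pref S j.val = S i ∪ Pi := by
    rw [hjdef]
    exact Pref_succ i.isLt
  set Gi := g (S i ∪ Pi) - g Pi with hGi
  set Gj := g (S j ∪ Pref S j.val) - g (Pref S j.val) with hGj
  have hGipos : 0 < Gi := gmarg_pos hdm hdec i
  have hGjpos : 0 < Gj := gmarg_pos hdm hdec j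
  have hFi : f (S i ∪ Pi) - f Pi = decompDensity f g S i * Gi := fmarg_eq hdm hdec i
  have hFj : f (S j ∪ Pref S j.val) - f (Pref S j.val) = decompDensity f g S j * Gj :=
    fmarg_eq hdm hdec j
  set T := S i ∪ S j with hT
  have hTne : T.Nonempty := (hdec.nonempty i).mono Finset.subset_union_left
  have hTdisj : Disjoint T Pi := by
    rw [hT]
    apply Finset.disjoint_union_left.2
    constructor
    · exact S_disj_Pref hdec i
    · exact Finset.disjoint_of_subset_right (by rw [hPj] at *; exact Finset.subset_union_right)
        (S_disj_Pref hdec j)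
  have hTU : T ∪ Pi = S j ∪ Pref S j.val := by
    rw [hT, hPj, Finset.union_comm (S i) (S j), Finset.union_assoc]
  have hmarg : margDensity f g T (below S i)
      = (decompDensity f g S j * Gj + decompDensity f g S i * Gi) / (Gj + Gi) := by
    unfold margDensity marginal
    rw [below_eq_Pref, ← hPi, hTU]
    have h1 : f (S j ∪ Pref S j.val) - f Pi
        = (f (S j ∪ Pref S j.val) - f (Pref S j.val)) + (f (S i ∪ Pi) - f Pi) := by
      rw [hPj]; ring
    have h2 : g (S j ∪ Pref S j.val) - g Pi = Gj + Gi := by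
      rw [hGj, hGi, hPj]; ring
    rw [h1, h2, hFi, hFj]
  have hge : decompDensity f g S i ≤ margDensity f g T (below S i) := by
    rw [hmarg]
    rw [le_div_iff₀ (by linarith)]
    have h2 : decompDensity f g S i * Gj ≤ decompDensity f g S j * Gj :=
      mul_le_mul_of_nonneg_right hc (le_of_lt hGjpos)
    have h3 : decompDensity f g S i * (Gj + Gi)
        = decompDensity f g S i * Gj + decompDensity f g S i * Gi := by ring
    linarith
  have hsub := hdec.maximal i T hTne (by rw [below_eq_Pref]; exact hTdisj) hge
  obtain ⟨v, hv⟩ := hdec.nonempty j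
  have hvSi : v ∈ S i := hsub (Finset.mem_union_right _ hv)
  have : v ∈ Pref S j.val := by
    rw [hPj]; exact Finset.mem_union_left _ hvSi
  exact (Finset.disjoint_left.1 (S_disj_Pref hdec j) hv) this

lemma rho_lt_of_lt (hdm : DualModular f g) (hdec : IsDensityDecomposition f g S)
    {i j : Fin k} (hij : i < j) : decompDensity f g S j < decompDensity f g S i := by
  have key : ∀ m : ℕ, ∀ j : Fin k, j.val = m → ∀ i : Fin k, i < j →
      decompDensity f g S j < decompDensity f g S i := by
    intro m
    induction m using Nat.strong_induction_on with
    | _ m ih =>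
      intro j hj i hij
      have hij' : i.val < j.val := hij
      by_cases hadj : i.val + 1 = j.val
      · have : j = ⟨i.val + 1, by omega⟩ := Fin.ext (by simp only [Fin.val_mk]; omega)
        rw [this]
        exact rho_adj hdm hdec i (by omega)
      · have hj1 : 0 < j.val := by omega
        set j' : Fin k := ⟨j.val - 1, by omega⟩ with hj'def
        have h1 : i < j' := by
          rw [Fin.lt_def]; simp only [hj'def]; omega
        have h2 : decompDensity f g S j' < decompDensity f g S i :=
          ih j'.val (by simp only [hj'def, Fin.val_mk]; omega) j' rfl i h1
        have h3 : decompDensity f g S j < decompDensity f g S j' := by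
          have : j = ⟨j'.val + 1, by simp only [hj'def, Fin.val_mk]; omega⟩ :=
            Fin.ext (by simp only [hj'def, Fin.val_mk]; omega)
          rw [this]
          exact rho_adj hdm hdec j' (by simp only [hj'def, Fin.val_mk]; omega)
        linarith
  exact key j.val j rfl i hij

lemma rho_le_of_le (hdm : DualModular f g) (hdec : IsDensityDecomposition f g S)
    {i j : Fin k} (hij : i ≤ j) : decompDensity f g S j ≤ decompDensity f g S i := by
  rcases eq_or_lt_of_le hij with h | h
  · rw [h]
  · exact le_of_lt (rho_lt_of_lt hdm hdec h)

end Decomp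

section Main

variable {V : Type*} [Fintype V] [DecidableEq V]
variable {f g : Finset V → ℝ} {k : ℕ} {S : Fin k → Finset V}

/-- The invariant carried along the density decomposition prefix. -/
def Good (f g : Finset V → ℝ) (S : Fin k → Finset V) (ρstar x' y' : V → ℝ) (j : ℕ) : Prop :=
  (∀ v ∈ Pref S j, x' v / y' v = ρstar v) ∧
  (∀ v, v ∉ Pref S j → ∀ l : Fin k, (l : ℕ) < j → x' v / y' v < decompDensity f g S l) ∧
  (∑ v ∈ Pref S j, x' v = f (Pref S j)) ∧ (∑ v ∈ Pref S j, y' v = g (Pref S j))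

/-- A witness that an allocation's densities deviate from the decomposition densities. -/
def Wit (f g : Finset V → ℝ) (S : Fin k → Finset V) (ρstar x' y' : V → ℝ) : Prop :=
  ∃ (j : Fin k) (μ : ℝ), Good f g S ρstar x' y' j.val ∧ 0 < μ ∧
    decompDensity f g S j ≤ μ ∧ (∀ v, v ∉ Pref S j.val → x' v / y' v ≤ μ) ∧
    (∃ v₀, v₀ ∉ Pref S j.val ∧ x' v₀ / y' v₀ = μ) ∧
    (decompDensity f g S j < μ ∨ (μ = decompDensity f g S j ∧
      (∀ v ∈ S j, x' v / y' v = μ) ∧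
      ∃ v₀, v₀ ∉ Pref S j.val ∧ v₀ ∉ S j ∧ x' v₀ / y' v₀ = μ))

lemma dichotomy (hdm : DualModular f g) (hdec : IsDensityDecomposition f g S)
    {ρstar : V → ℝ} (hρ : ∀ i : Fin k, ∀ v ∈ S i, ρstar v = decompDensity f g S i)
    {x' y' : V → ℝ} (ha : Allocation f g x' y') :
    (∀ v, x' v / y' v = ρstar v) ∨ Wit f g S ρstar x' y' := by
  have hyv : ∀ v, 0 < y' v := y_pos hdm ha.2
  have hxv : ∀ v, 0 ≤ x' v := ha.1.1
  set d := fun v => x' v / y' v with hd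
  have hd0 : ∀ v, 0 ≤ d v := fun v => div_nonneg (hxv v) (le_of_lt (hyv v))
  have hxd : ∀ v, x' v = d v * y' v := fun v => by
    rw [hd]; field_simp [ne_of_gt (hyv v)]
  have key : ∀ n : ℕ, ∀ j : ℕ, j ≤ k → k - j ≤ n → Good f g S ρstar x' y' j →
      (∀ v, d v = ρstar v) ∨ Wit f g S ρstar x' y' := by
    intro n
    induction n with
    | zero =>
      intro j hjk hkj hGood
      have hjk' : j = k := by omega
      left
      intro v
      exact hGood.1 v (by rw [Pref_top hdec hjk'.ge]; exact Finset.mem_univ v)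
    | succ n ih =>
      intro j hjk hkj hGood
      by_cases hj : j = k
      · left
        intro v
        exact hGood.1 v (by rw [Pref_top hdec hj.ge]; exact Finset.mem_univ v)
      have hjlt : j < k := lt_of_le_of_ne hjk hj
      set i : Fin k := ⟨j, hjlt⟩ with hidef
      set P := Pref S j with hP
      set Out := Finset.univ \ P with hOut
      have hSiOut : S i ⊆ Out := by
        intro v hv
        rw [hOut, Finset.mem_sdiff]
        exact ⟨Finset.mem_univ v, Finset.disjoint_left.1 (S_disj_Pref hdec i) hv⟩
      have hOutne : Out.Nonempty := (hdec.nonempty i).mono hSiOut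
      obtain ⟨v₀, hv₀Out, hv₀max⟩ := Finset.exists_max_image Out d hOutne
      set μ := d v₀ with hμ
      set ρi := decompDensity f g S i with hρi
      have hρipos : 0 ≤ ρi := rho_nonneg hdm hdec i
      set Gi := g (S i ∪ P) - g P with hGi
      have hGipos : 0 < Gi := gmarg_pos hdm hdec i
      have hFi : f (S i ∪ P) - f P = ρi * Gi := fmarg_eq hdm hdec i
      have hPsucc : Pref S (j + 1) = S i ∪ P := Pref_succ hjlt
      have hdisj : Disjoint (S i) P := S_disj_Pref hdec i
      have hsplitx : ∑ v ∈ Pref S (j+1), x' v = ∑ v ∈ S i, x' v + ∑ v ∈ P, x' v := by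
        rw [hPsucc, Finset.sum_union hdisj]
      have hsplity : ∑ v ∈ Pref S (j+1), y' v = ∑ v ∈ S i, y' v + ∑ v ∈ P, y' v := by
        rw [hPsucc, Finset.sum_union hdisj]
      have hxS : ρi * Gi ≤ ∑ v ∈ S i, x' v := by
        have h1 := ha.1.2.2 (Pref S (j+1))
        rw [hsplitx, hGood.2.2.1] at h1
        have h2 : f (Pref S (j+1)) = ρi * Gi + f P := by rw [hPsucc]; linarith
        linarith
      have hyS : ∑ v ∈ S i, y' v ≤ Gi := by
        have h1 := ha.2.2.2 (Pref S (j+1))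
        rw [hsplity, hGood.2.2.2] at h1
        have h2 : g (Pref S (j+1)) = Gi + g P := by rw [hPsucc]; linarith
        linarith
      have hySpos : 0 < ∑ v ∈ S i, y' v :=
        Finset.sum_pos (fun v _ => hyv v) (hdec.nonempty i)
      have hxmu : ∑ v ∈ S i, x' v ≤ μ * ∑ v ∈ S i, y' v := by
        rw [Finset.mul_sum]
        apply Finset.sum_le_sum
        intro v hv
        rw [hxd v]
        exact mul_le_mul_of_nonneg_right (hv₀max v (hSiOut hv)) (le_of_lt (hyv v))
      have hρμ : ρi ≤ μ := by
        have h1 : ρi * ∑ v ∈ S i, y' v ≤ ρi * Gi :=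
          mul_le_mul_of_nonneg_left hyS hρipos
        have h2 : ρi * ∑ v ∈ S i, y' v ≤ μ * ∑ v ∈ S i, y' v := by linarith
        exact le_of_mul_le_mul_right (by linarith [h2]) hySpos
      have hOutmem : ∀ v, v ∉ P ↔ v ∈ Out := by
        intro v
        rw [hOut, Finset.mem_sdiff]
        simp
      rcases lt_or_eq_of_le hρμ with hlt | heq
      · -- witness, case α
        right
        refine ⟨i, μ, hGood, by linarith, le_of_lt hlt, ?_, ⟨v₀, ?_, rfl⟩, Or.inl hlt⟩
        · intro v hv
          exact hv₀max v ((hOutmem v).1 hv)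
        · exact (hOutmem v₀).2 hv₀Out
      · -- μ = ρi
        by_cases hρ0 : ρi = 0
        · -- everything outside has density 0 = ρstar
          left
          intro v
          by_cases hvP : v ∈ P
          · exact hGood.1 v hvP
          · have hv1 : d v ≤ μ := hv₀max v ((hOutmem v).1 hvP)
            have hμ0 : μ = 0 := heq.symm.trans hρ0
            have hv2 : d v = 0 := le_antisymm (by rw [hμ0] at hv1; exact hv1) (hd0 v)
            obtain ⟨i', hvi'⟩ := exists_block hdec v
            have hji' : j ≤ (i' : ℕ) := block_ge_of_not_mem_Pref hdec hvP hvi'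
            have hii' : i ≤ i' := by rw [Fin.le_def]; exact hji'
            have : decompDensity f g S i' ≤ ρi := rho_le_of_le hdm hdec hii'
            have h9 : ρstar v = decompDensity f g S i' := hρ i' v hvi'
            have h10 : 0 ≤ decompDensity f g S i' := rho_nonneg hdm hdec i'
            rw [hv2, h9]
            linarith [hρ0]
        have hρipos' : 0 < ρi := lt_of_le_of_ne hρipos (Ne.symm hρ0)
        -- all the inequalities are equalities
        have heq1 : ∑ v ∈ S i, x' v = ρi * ∑ v ∈ S i, y' v := by
          have h1 : ρi * ∑ v ∈ S i, y' v ≤ ρi * Gi :=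
            mul_le_mul_of_nonneg_left hyS hρipos
          rw [← heq] at hxmu
          linarith
        have heq2 : ∑ v ∈ S i, y' v = Gi := by
          have h1 : ρi * ∑ v ∈ S i, y' v ≤ ρi * Gi :=
            mul_le_mul_of_nonneg_left hyS hρipos
          rw [← heq] at hxmu
          have h2 : ρi * ∑ v ∈ S i, y' v = ρi * Gi := by linarith
          exact mul_left_cancel₀ (ne_of_gt hρipos') h2
        have heq3 : ∑ v ∈ S i, x' v = ρi * Gi := by rw [heq1, heq2]
        have hallS : ∀ v ∈ S i, d v = μ := by
          by_contra hc
          push_neg at hc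
          obtain ⟨v₁, hv₁, hv₁ne⟩ := hc
          have hv₁lt : d v₁ < μ := lt_of_le_of_ne (hv₀max v₁ (hSiOut hv₁)) hv₁ne
          have hstrict : ∑ v ∈ S i, x' v < μ * ∑ v ∈ S i, y' v := by
            rw [Finset.mul_sum]
            apply Finset.sum_lt_sum
            · intro v hv
              rw [hxd v]
              exact mul_le_mul_of_nonneg_right (hv₀max v (hSiOut hv)) (le_of_lt (hyv v))
            · refine ⟨v₁, hv₁, ?_⟩
              rw [hxd v₁]
              exact mul_lt_mul_of_pos_right hv₁lt (hyv v₁)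
          rw [heq1, heq] at hstrict
          exact lt_irrefl _ hstrict
        by_cases hextra : ∃ w, w ∈ Out ∧ w ∉ S i ∧ d w = μ
        · -- witness, case β
          right
          obtain ⟨w, hwOut, hwS, hwμ⟩ := hextra
          refine ⟨i, μ, hGood, by linarith, le_of_eq heq, ?_, ⟨v₀, ?_, rfl⟩,
            Or.inr ⟨heq.symm, hallS, ⟨w, (hOutmem w).2 hwOut, hwS, hwμ⟩⟩⟩
          · intro v hv
            exact hv₀max v ((hOutmem v).1 hv)
          · exact (hOutmem v₀).2 hv₀Out
        · -- recurse
          push_neg at hextra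
          have hGood' : Good f g S ρstar x' y' (j+1) := by
            refine ⟨?_, ?_, ?_, ?_⟩
            · intro v hv
              rw [hPsucc, Finset.mem_union] at hv
              show d v = ρstar v
              rcases hv with hv | hv
              · rw [hallS v hv, ← heq, hρ i v hv]
              · exact hGood.1 v hv
            · intro v hv l hl
              have hvP : v ∉ P := by
                intro hc
                exact hv (by rw [hPsucc]; exact Finset.mem_union_right _ hc)
              have hvSi : v ∉ S i := by
                intro hc
                exact hv (by rw [hPsucc]; exact Finset.mem_union_left _ hc)
              show d v < decompDensity f g S l
              rcases Nat.lt_succ_iff_lt_or_eq.1 hl with hl' | hl'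
              · exact hGood.2.1 v hvP l hl'
              · have hli : l = i := Fin.ext hl'
                rw [hli, ← hρi, heq]
                exact lt_of_le_of_ne (hv₀max v ((hOutmem v).1 hvP))
                  (hextra v ((hOutmem v).1 hvP) hvSi)
            · rw [hsplitx, hGood.2.2.1, heq3]
              rw [hPsucc]
              linarith
            · rw [hsplity, hGood.2.2.2, heq2]
              rw [hPsucc]
              linarith
          exact ih (j+1) hjlt (by omega) hGood'
  have hGood0 : Good f g S ρstar x' y' 0 := by
    refine ⟨?_, ?_, ?_, ?_⟩
    · intro v hv; rw [Pref_zero] at hv; exact absurd hv (Finset.notMem_empty v)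
    · intro v _ l hl; omega
    · rw [Pref_zero]; simp [hdm.f_empty]
    · rw [Pref_zero]; simp [hdm.g_empty]
  exact key (k - 0) 0 (Nat.zero_le k) (le_refl _) hGood0

end Main

section Clients

variable {V : Type*} [Fintype V] [DecidableEq V]
variable {f g : Finset V → ℝ} {k : ℕ} {S : Fin k → Finset V}

lemma wit_facts (hdm : DualModular f g) (hdec : IsDensityDecomposition f g S)
    {ρstar : V → ℝ} (hρ : ∀ i : Fin k, ∀ v ∈ S i, ρstar v = decompDensity f g S i)
    {x' y' : V → ℝ} (hw : Wit f g S ρstar x' y') :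
    ∃ (j : Fin k) (μ : ℝ), Good f g S ρstar x' y' j.val ∧ 0 < μ ∧
      decompDensity f g S j ≤ μ ∧ (∀ v, v ∉ Pref S j.val → x' v / y' v ≤ μ) ∧
      (∃ v₀, v₀ ∉ Pref S j.val ∧ x' v₀ / y' v₀ = μ) ∧
      (decompDensity f g S j < μ ∨ (μ = decompDensity f g S j ∧
        (∀ v ∈ S j, x' v / y' v = μ) ∧
        ∃ v₀, v₀ ∉ Pref S j.val ∧ v₀ ∉ S j ∧ x' v₀ / y' v₀ = μ)) ∧
      (∀ v ∈ Pref S j.val, μ < ρstar v) ∧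
      (∀ v, v ∉ Pref S j.val → ρstar v ≤ μ) := by
  obtain ⟨j, μ, hGood, hμpos, hρjμ, hout, ⟨v₀, hv₀P, hv₀μ⟩, hcase⟩ := hw
  refine ⟨j, μ, hGood, hμpos, hρjμ, hout, ⟨v₀, hv₀P, hv₀μ⟩, hcase, ?_, ?_⟩
  · intro v hv
    obtain ⟨l, hl, hvl⟩ := mem_Pref.1 hv
    rw [hρ l v hvl]
    calc μ = x' v₀ / y' v₀ := hv₀μ.symm
      _ < decompDensity f g S l := hGood.2.1 v₀ hv₀P l hl
  · intro v hv
    obtain ⟨l, hvl⟩ := exists_block hdec v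
    have hjl : j ≤ l := by
      rw [Fin.le_def]
      exact block_ge_of_not_mem_Pref hdec hv hvl
    rw [hρ l v hvl]
    exact le_trans (rho_le_of_le hdm hdec hjl) hρjμ

lemma lex_min (hdm : DualModular f g) (hdec : IsDensityDecomposition f g S)
    {ρstar : V → ℝ} (hρ : ∀ i : Fin k, ∀ v ∈ S i, ρstar v = decompDensity f g S i)
    {x y : V → ℝ} (hd : ∀ v, x v / y v = ρstar v)
    {x' y' : V → ℝ} (ha' : Allocation f g x' y') :
    sortedDensities x y ≤ sortedDensities x' y' := by
  have hmapeq : Finset.univ.val.map (fun v => x v / y v) = Finset.univ.val.map ρstar :=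
    Multiset.map_congr rfl (fun v _ => hd v)
  rcases dichotomy hdm hdec hρ ha' with h | hw
  · have : sortedDensities x y = sortedDensities x' y' := by
      rw [sortedDensities_eq_SD, sortedDensities_eq_SD, hmapeq,
        (Multiset.map_congr rfl (fun v _ => h v) :
          Finset.univ.val.map (fun v => x' v / y' v) = Finset.univ.val.map ρstar)]
    exact le_of_eq this
  · obtain ⟨j, μ, hGood, hμpos, hρjμ, hout, ⟨v₀, hv₀P, hv₀μ⟩, hcase, hin, houtρ⟩ :=
      wit_facts hdm hdec hρ hw
    set d' := fun v => x' v / y' v with hd'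
    -- membership characterizations
    have hmemgt : ∀ v, μ < ρstar v ↔ v ∈ Pref S j.val := by
      intro v
      constructor
      · intro hv
        by_contra hc
        exact absurd hv (not_lt.2 (houtρ v hc))
      · exact hin v
    have hsub1 : Finset.univ.filter (fun v => μ < ρstar v)
        ⊆ Finset.univ.filter (fun v => μ < d' v) := by
      intro v hv
      rw [Finset.mem_filter] at hv ⊢
      refine ⟨Finset.mem_univ v, ?_⟩
      have hvP := (hmemgt v).1 hv.2
      show μ < x' v / y' v
      rw [hGood.1 v hvP]
      exact hv.2
    have hagree1 : ∀ v ∈ Finset.univ.filter (fun v => μ < ρstar v), ρstar v = d' v := by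
      intro v hv
      rw [Finset.mem_filter] at hv
      exact (hGood.1 v ((hmemgt v).1 hv.2)).symm
    -- counting
    have hsub2 : Finset.univ.filter (fun v => μ ≤ ρstar v)
        ⊆ Finset.univ.filter (fun v => μ ≤ d' v) := by
      intro v hv
      rw [Finset.mem_filter] at hv ⊢
      refine ⟨Finset.mem_univ v, ?_⟩
      by_cases hvP : v ∈ Pref S j.val
      · show μ ≤ x' v / y' v
        rw [hGood.1 v hvP]; exact hv.2
      · -- outside: ρstar v = μ forces v ∈ S j and case β
        have hle := houtρ v hvP
        have hveq : ρstar v = μ := le_antisymm hle hv.2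
        obtain ⟨l, hvl⟩ := exists_block hdec v
        have hjl : j ≤ l := by
          rw [Fin.le_def]; exact block_ge_of_not_mem_Pref hdec hvP hvl
        have hlj : l = j := by
          by_contra hc
          have hjl' : j < l := lt_of_le_of_ne hjl (Ne.symm hc)
          have h1 : decompDensity f g S l < decompDensity f g S j :=
            rho_lt_of_lt hdm hdec hjl'
          have h2 : ρstar v = decompDensity f g S l := hρ l v hvl
          -- μ = ρstar v = ρ_l < ρ_j ≤ μ
          rw [hveq] at h2
          linarith [hρjμ, h2 ▸ h1]
        rcases hcase with hα | hβ
        · -- case α impossible: μ = ρstar v = ρ_l = ρ_j < μ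
          have h2 : ρstar v = decompDensity f g S j := by rw [← hlj]; exact hρ l v hvl
          rw [hveq] at h2
          linarith
        · obtain ⟨hβ1, hβ2, _⟩ := hβ
          have : v ∈ S j := by rw [← hlj]; exact hvl
          show μ ≤ x' v / y' v
          rw [hβ2 v this]
    have hv₀C2 : v₀ ∈ Finset.univ.filter (fun v => μ ≤ d' v) := by
      rw [Finset.mem_filter]
      exact ⟨Finset.mem_univ v₀, le_of_eq hv₀μ.symm⟩
    -- pick the element showing strictness
    have hstrict : ∃ w, w ∈ Finset.univ.filter (fun v => μ ≤ d' v) ∧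
        w ∉ Finset.univ.filter (fun v => μ ≤ ρstar v) := by
      rcases hcase with hα | hβ
      · refine ⟨v₀, hv₀C2, ?_⟩
        rw [Finset.mem_filter]
        rintro ⟨-, hc⟩
        have hveq : ρstar v₀ = μ := le_antisymm (houtρ v₀ hv₀P) hc
        obtain ⟨l, hvl⟩ := exists_block hdec v₀
        have hjl : j ≤ l := by
          rw [Fin.le_def]; exact block_ge_of_not_mem_Pref hdec hv₀P hvl
        have h1 : decompDensity f g S l ≤ decompDensity f g S j := rho_le_of_le hdm hdec hjl
        have h2 : ρstar v₀ = decompDensity f g S l := hρ l v₀ hvl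
        rw [hveq] at h2
        linarith [h2 ▸ h1]
      · obtain ⟨hβ1, hβ2, w, hwP, hwS, hwμ⟩ := hβ
        refine ⟨w, ?_, ?_⟩
        · rw [Finset.mem_filter]
          exact ⟨Finset.mem_univ w, le_of_eq hwμ.symm⟩
        · rw [Finset.mem_filter]
          rintro ⟨-, hc⟩
          have hveq : ρstar w = μ := le_antisymm (houtρ w hwP) hc
          obtain ⟨l, hvl⟩ := exists_block hdec w
          have hjl : j ≤ l := by
            rw [Fin.le_def]; exact block_ge_of_not_mem_Pref hdec hwP hvl
          have hlj : l ≠ j := by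
            intro hc'
            exact hwS (hc' ▸ hvl)
          have hjl' : j < l := lt_of_le_of_ne hjl (Ne.symm hlj)
          have h1 : decompDensity f g S l < decompDensity f g S j :=
            rho_lt_of_lt hdm hdec hjl'
          have h2 : ρstar w = decompDensity f g S l := hρ l w hvl
          rw [hveq] at h2
          rw [hβ1] at h2
          linarith [h2 ▸ h1]
    obtain ⟨w, hw1, hw2⟩ := hstrict
    have hcount : (Finset.univ.filter (fun v => μ ≤ ρstar v)).card
        < (Finset.univ.filter (fun v => μ ≤ d' v)).card := by
      apply Finset.card_lt_card
      rw [Finset.ssubset_iff_of_subset hsub2]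
      exact ⟨w, hw1, hw2⟩
    have hlex : List.Lex (· < ·) (SD (Finset.univ.val.map ρstar))
        (SD (Finset.univ.val.map d')) :=
      SD_map_lt ρstar d' μ hsub1 hagree1 hcount
    have : sortedDensities x y < sortedDensities x' y' := by
      rw [sortedDensities_eq_SD, sortedDensities_eq_SD, hmapeq]
      exact hlex
    exact le_of_lt this

lemma maximin_implies_density (hdm : DualModular f g) (hdec : IsDensityDecomposition f g S)
    {ρstar : V → ℝ} (hρ : ∀ i : Fin k, ∀ v ∈ S i, ρstar v = decompDensity f g S i)
    {x y : V → ℝ} (ha : Allocation f g x y) (hmax : LocallyMaximin f g x y) :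
    ∀ v, x v / y v = ρstar v := by
  rcases dichotomy hdm hdec hρ ha with h | hw
  · exact h
  exfalso
  obtain ⟨j, μ, hGood, hμpos, hρjμ, hout, ⟨v₀, hv₀P, hv₀μ⟩, hcase, hin, houtρ⟩ :=
    wit_facts hdm hdec hρ hw
  set d := fun v => x v / y v with hd
  set P := Pref S j.val with hP
  set M := Finset.univ.filter (fun v => v ∉ P ∧ d v = μ) with hM
  have hlevel : Finset.univ.filter (fun v => μ ≤ x v / y v) = P ∪ M := by
    ext v
    rw [Finset.mem_filter, Finset.mem_union, hM, Finset.mem_filter]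
    constructor
    · rintro ⟨-, hv⟩
      by_cases hvP : v ∈ P
      · exact Or.inl hvP
      · exact Or.inr ⟨Finset.mem_univ v, hvP, le_antisymm (hout v hvP) hv⟩
    · rintro (hvP | ⟨-, hvP, hvμ⟩)
      · refine ⟨Finset.mem_univ v, ?_⟩
        rw [hGood.1 v hvP]
        exact le_of_lt (hin v hvP)
      · exact ⟨Finset.mem_univ v, le_of_eq hvμ.symm⟩
  have hMP : Disjoint M P := by
    rw [Finset.disjoint_left]
    intro v hv
    rw [hM, Finset.mem_filter] at hv
    exact hv.2.1
  have hMne : M.Nonempty := by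
    refine ⟨v₀, ?_⟩
    rw [hM, Finset.mem_filter]
    exact ⟨Finset.mem_univ v₀, hv₀P, hv₀μ⟩
  obtain ⟨htx, hty⟩ := hmax μ hμpos
  rw [hlevel] at htx hty
  have hsumx : ∑ v ∈ P ∪ M, x v = ∑ v ∈ M, x v + ∑ v ∈ P, x v := by
    rw [Finset.union_comm, Finset.sum_union hMP]
  have hsumy : ∑ v ∈ P ∪ M, y v = ∑ v ∈ M, y v + ∑ v ∈ P, y v := by
    rw [Finset.union_comm, Finset.sum_union hMP]
  have hxM : ∑ v ∈ M, x v = f (M ∪ P) - f P := by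
    have := htx
    rw [hsumx, hGood.2.2.1] at this
    rw [Finset.union_comm M P]
    linarith
  have hyM : ∑ v ∈ M, y v = g (M ∪ P) - g P := by
    have := hty
    rw [hsumy, hGood.2.2.2] at this
    rw [Finset.union_comm M P]
    linarith
  have hyv : ∀ v, 0 < y v := y_pos hdm ha.2
  have hxdμ : ∑ v ∈ M, x v = μ * ∑ v ∈ M, y v := by
    rw [Finset.mul_sum]
    apply Finset.sum_congr rfl
    intro v hv
    rw [hM, Finset.mem_filter] at hv
    have : x v = d v * y v := by
      rw [hd]; field_simp [ne_of_gt (hyv v)]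
    rw [this, hv.2.2]
  have hmargD : margDensity f g M (below S j) = μ := by
    unfold margDensity marginal
    rw [below_eq_Pref, ← hP]
    rw [← hxM, ← hyM, hxdμ]
    have hypos : 0 < ∑ v ∈ M, y v := Finset.sum_pos (fun v _ => hyv v) hMne
    field_simp
  have hle : margDensity f g M (below S j) ≤ decompDensity f g S j :=
    hdec.maxDensity j M hMne (by rw [below_eq_Pref, ← hP]; exact hMP)
  rcases hcase with hα | hβ
  · rw [hmargD] at hle
    linarith
  · obtain ⟨hβ1, hβ2, w, hwP, hwS, hwμ⟩ := hβ
    have hMsub : M ⊆ S j := by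
      apply hdec.maximal j M hMne (by rw [below_eq_Pref, ← hP]; exact hMP)
      rw [hmargD]
      show decompDensity f g S j ≤ μ
      exact le_of_eq hβ1.symm
    apply hwS
    apply hMsub
    rw [hM, Finset.mem_filter]
    exact ⟨Finset.mem_univ w, hwP, hwμ⟩

end Clients

section Exchange

variable {V : Type*} [Fintype V] [DecidableEq V]
variable {f g : Finset V → ℝ}

/-- If `T` is not tight for a union/intersection-closed tight-set family containing
`∅` and `univ`, there is `u ∈ T` and `v ∉ T` such that no tight set contains `u`
but not `v`. -/
lemma exists_blocking_pair (tight : Finset V → Prop) (T : Finset V)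
    (h_univ : tight Finset.univ) (h_empty : tight (∅ : Finset V))
    (h_inter : ∀ A B, tight A → tight B → tight (A ∩ B))
    (h_union : ∀ A B, tight A → tight B → tight (A ∪ B))
    (hT : ¬ tight T) :
    ∃ u ∈ T, ∃ v, v ∉ T ∧ ∀ A : Finset V, u ∈ A → v ∉ A → ¬ tight A := by
  by_contra hc
  push_neg at hc
  -- hc : ∀ u ∈ T, ∀ v, v ∉ T → ∃ A, u ∈ A ∧ v ∉ A ∧ tight A
  have key : ∀ u ∈ T, ∃ C : Finset V, u ∈ C ∧ C ⊆ T ∧ tight C := by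
    intro u hu
    have claim : ∀ D : Finset V, D ⊆ Finset.univ \ T →
        ∃ C : Finset V, u ∈ C ∧ tight C ∧ ∀ v ∈ D, v ∉ C := by
      intro D
      induction D using Finset.induction_on with
      | empty =>
        intro _
        exact ⟨Finset.univ, Finset.mem_univ u, h_univ, fun v hv => absurd hv
          (Finset.notMem_empty v)⟩
      | @insert v D hvD ih =>
        intro hsub
        obtain ⟨C, huC, hCt, hCd⟩ := ih (fun w hw => hsub (Finset.mem_insert_of_mem hw))
        have hvT : v ∉ T := by
          have := hsub (Finset.mem_insert_self v D)
          rw [Finset.mem_sdiff] at this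
          exact this.2
        obtain ⟨A, huA, hvA, hAt⟩ := hc u hu v hvT
        refine ⟨C ∩ A, Finset.mem_inter.2 ⟨huC, huA⟩, h_inter C A hCt hAt, ?_⟩
        intro w hw
        rcases Finset.mem_insert.1 hw with rfl | hw
        · intro hcon
          exact hvA (Finset.mem_inter.1 hcon).2
        · intro hcon
          exact hCd w hw (Finset.mem_inter.1 hcon).1
    obtain ⟨C, huC, hCt, hCd⟩ := claim (Finset.univ \ T) (le_refl _)
    refine ⟨C, huC, ?_, hCt⟩
    intro w hw
    by_contra hwT
    exact hCd w (Finset.mem_sdiff.2 ⟨Finset.mem_univ w, hwT⟩) hw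
  have claim2 : ∀ D : Finset V, D ⊆ T → ∃ C : Finset V, C ⊆ T ∧ tight C ∧ D ⊆ C := by
    intro D
    induction D using Finset.induction_on with
    | empty =>
      intro _
      exact ⟨∅, Finset.empty_subset T, h_empty, le_refl _⟩
    | @insert u D hvD ih =>
      intro hsub
      obtain ⟨C, hCT, hCt, hDC⟩ := ih (fun w hw => hsub (Finset.mem_insert_of_mem hw))
      obtain ⟨Cu, huCu, hCuT, hCut⟩ := key u (hsub (Finset.mem_insert_self u D))
      refine ⟨C ∪ Cu, Finset.union_subset hCT hCuT, h_union C Cu hCt hCut, ?_⟩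
      intro w hw
      rcases Finset.mem_insert.1 hw with rfl | hw
      · exact Finset.mem_union_right _ huCu
      · exact Finset.mem_union_left _ (hDC hw)
  obtain ⟨C, hCT, hCt, hTC⟩ := claim2 T (le_refl _)
  have : C = T := Finset.Subset.antisymm hCT hTC
  rw [this] at hCt
  exact hT hCt

lemma f_tight_closed (hdm : DualModular f g) {x : V → ℝ} (hx : memBf f x) (A B : Finset V)
    (hA : ∑ v ∈ A, x v = f A) (hB : ∑ v ∈ B, x v = f B) :
    (∑ v ∈ A ∩ B, x v = f (A ∩ B)) ∧ (∑ v ∈ A ∪ B, x v = f (A ∪ B)) := by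
  have h1 := hx.2.2 (A ∪ B)
  have h2 := hx.2.2 (A ∩ B)
  have hsum : ∑ v ∈ A ∪ B, x v + ∑ v ∈ A ∩ B, x v = ∑ v ∈ A, x v + ∑ v ∈ B, x v :=
    Finset.sum_union_inter
  have hsuper := hdm.f_supermodular A B
  constructor <;> linarith

lemma g_tight_closed (hdm : DualModular f g) {y : V → ℝ} (hy : memBg g y) (A B : Finset V)
    (hA : ∑ v ∈ A, y v = g A) (hB : ∑ v ∈ B, y v = g B) :
    (∑ v ∈ A ∩ B, y v = g (A ∩ B)) ∧ (∑ v ∈ A ∪ B, y v = g (A ∪ B)) := by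
  have h1 := hy.2.2 (A ∪ B)
  have h2 := hy.2.2 (A ∩ B)
  have hsum : ∑ v ∈ A ∪ B, y v + ∑ v ∈ A ∩ B, y v = ∑ v ∈ A, y v + ∑ v ∈ B, y v :=
    Finset.sum_union_inter
  have hsub := hdm.g_submodular A B
  constructor <;> linarith

lemma sum_shift (x : V → ℝ) (u v : V) (ε δ : ℝ) (A : Finset V) :
    ∑ w ∈ A, (x w + (if w = u then ε else 0) + (if w = v then δ else 0))
      = ∑ w ∈ A, x w + (if u ∈ A then ε else 0) + (if v ∈ A then δ else 0) := by
  rw [Finset.sum_add_distrib, Finset.sum_add_distrib,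
    Finset.sum_ite_eq' A u (fun _ => ε), Finset.sum_ite_eq' A v (fun _ => δ)]

/-- The key lex-improvement contradiction: an allocation `(x₂, y₂)` whose densities
agree with those of `(x, y)` except at `u` (strictly decreased) and `v` (both old
and new values below `d u`) is lexicographically strictly smaller. -/
lemma lex_improve {x y x₂ y₂ : V → ℝ} (u v : V) (huv : u ≠ v)
    (hagree : ∀ w, w ≠ u → w ≠ v → x₂ w / y₂ w = x w / y w)
    (hu : x₂ u / y₂ u < x u / y u)
    (hv : x v / y v < x u / y u)
    (hv₂ : x₂ v / y₂ v < x u / y u) :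
    sortedDensities x₂ y₂ < sortedDensities x y := by
  set d := fun w => x w / y w with hd
  set d₂ := fun w => x₂ w / y₂ w with hd₂
  set θ := (max (d v) (max (d₂ u) (d₂ v)) + d u) / 2 with hθ
  have hm : max (d v) (max (d₂ u) (d₂ v)) < d u := by
    rw [max_lt_iff, max_lt_iff]
    exact ⟨hv, hu, hv₂⟩
  have hθ1 : d v < θ ∧ d₂ u < θ ∧ d₂ v < θ := by
    have h1 : max (d v) (max (d₂ u) (d₂ v)) < θ := by rw [hθ]; linarith
    rw [max_lt_iff, max_lt_iff] at h1
    exact ⟨h1.1, h1.2.1, h1.2.2⟩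
  have hθ2 : θ < d u := by rw [hθ]; linarith
  apply sorted_lt_of_lex
  refine SD_map_lt _ _ θ ?_ ?_ ?_
  · -- subset for (θ < ·)
    intro w hw
    rw [Finset.mem_filter] at hw ⊢
    refine ⟨Finset.mem_univ w, ?_⟩
    have hwu : w ≠ u := by rintro rfl; exact absurd hw.2 (not_lt.2 (le_of_lt hθ1.2.1))
    have hwv : w ≠ v := by rintro rfl; exact absurd hw.2 (not_lt.2 (le_of_lt hθ1.2.2))
    have := hagree w hwu hwv
    calc θ < x₂ w / y₂ w := hw.2
      _ = x w / y w := this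
  · intro w hw
    rw [Finset.mem_filter] at hw
    have hwu : w ≠ u := by rintro rfl; exact absurd hw.2 (not_lt.2 (le_of_lt hθ1.2.1))
    have hwv : w ≠ v := by rintro rfl; exact absurd hw.2 (not_lt.2 (le_of_lt hθ1.2.2))
    exact hagree w hwu hwv
  · apply Finset.card_lt_card
    rw [Finset.ssubset_iff_of_subset]
    · refine ⟨u, ?_, ?_⟩
      · rw [Finset.mem_filter]
        exact ⟨Finset.mem_univ u, le_of_lt hθ2⟩
      · rw [Finset.mem_filter]
        rintro ⟨-, hcon⟩
        exact absurd hcon (not_le.2 hθ1.2.1)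
    · intro w hw
      rw [Finset.mem_filter] at hw ⊢
      refine ⟨Finset.mem_univ w, ?_⟩
      have hwu : w ≠ u := by rintro rfl; exact absurd hw.2 (not_le.2 hθ1.2.1)
      have hwv : w ≠ v := by rintro rfl; exact absurd hw.2 (not_le.2 hθ1.2.2)
      calc θ ≤ x₂ w / y₂ w := hw.2
        _ = x w / y w := hagree w hwu hwv

lemma lexopt_implies_maximin (hdm : DualModular f g) {x y : V → ℝ}
    (hlex : LexOptimal f g x y) : LocallyMaximin f g x y := by
  obtain ⟨ha, hmin⟩ := hlex
  intro ρ hρpos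
  set d := fun w => x w / y w with hd
  set T := Finset.univ.filter (fun v => ρ ≤ x v / y v) with hT
  have hyv : ∀ v, 0 < y v := y_pos hdm ha.2
  have hxv : ∀ v, 0 ≤ x v := ha.1.1
  have hmemT : ∀ w, w ∈ T ↔ ρ ≤ d w := by
    intro w
    rw [hT, Finset.mem_filter]
    simp [hd]
  have hxT : ∑ v ∈ T, x v = f T := by
    by_contra hne
    obtain ⟨u, huT, v, hvT, hblock⟩ := exists_blocking_pair
      (fun A => ∑ w ∈ A, x w = f A) T ha.1.2.1 (by simp [hdm.f_empty])
      (fun A B hA hB => (f_tight_closed hdm ha.1 A B hA hB).1)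
      (fun A B hA hB => (f_tight_closed hdm ha.1 A B hA hB).2) hne
    have hslack : ∀ A : Finset V, u ∈ A → v ∉ A → f A < ∑ w ∈ A, x w :=
      fun A hu hv => lt_of_le_of_ne (ha.1.2.2 A) (fun hcon => hblock A hu hv hcon.symm)
    have huv : u ≠ v := fun hcon => hvT (hcon ▸ huT)
    set 𝒜 := (Finset.univ : Finset (Finset V)).filter (fun A => u ∈ A ∧ v ∉ A) with h𝒜
    have h𝒜mem : ∀ A, A ∈ 𝒜 ↔ (u ∈ A ∧ v ∉ A) := by
      intro A; rw [h𝒜, Finset.mem_filter]; simp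
    have h𝒜ne : 𝒜.Nonempty := ⟨{u}, (h𝒜mem {u}).2 ⟨Finset.mem_singleton_self u,
      fun hcon => huv (Finset.mem_singleton.1 hcon).symm⟩⟩
    obtain ⟨A₀, hA₀, hminA⟩ := Finset.exists_min_image 𝒜 (fun A => ∑ w ∈ A, x w - f A) h𝒜ne
    have hdv : d v < ρ := by
      by_contra hcon
      exact hvT ((hmemT v).2 (not_lt.1 hcon))
    have hxvρ : x v < ρ * y v := by
      rw [hd] at hdv
      calc x v = (x v / y v) * y v := by field_simp [ne_of_gt (hyv v)]
        _ < ρ * y v := mul_lt_mul_of_pos_right hdv (hyv v)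
    set ε := min (∑ w ∈ A₀, x w - f A₀) ((ρ * y v - x v)/2) with hε
    have hεpos : 0 < ε := by
      apply lt_min
      · have := hslack A₀ ((h𝒜mem A₀).1 hA₀).1 ((h𝒜mem A₀).1 hA₀).2
        linarith
      · linarith
    have hεA : ∀ A ∈ 𝒜, ε ≤ ∑ w ∈ A, x w - f A :=
      fun A hA => le_trans (min_le_left _ _) (hminA A hA)
    set x₂ := fun w => x w + (if w = u then -ε else 0) + (if w = v then ε else 0) with hx₂
    have hx₂u : x₂ u = x u - ε := by rw [hx₂]; simp [huv]; ring
    have hx₂v : x₂ v = x v + ε := by rw [hx₂]; simp [Ne.symm huv]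
    have hx₂w : ∀ w, w ≠ u → w ≠ v → x₂ w = x w := by
      intro w hwu hwv; rw [hx₂]; simp [hwu, hwv]
    have hxu_lb : f {u} ≤ x u - ε := by
      have h1 := hεA {u} ((h𝒜mem {u}).2 ⟨Finset.mem_singleton_self u,
        fun hcon => huv (Finset.mem_singleton.1 hcon).symm⟩)
      rw [Finset.sum_singleton] at h1
      linarith
    have halloc₂ : Allocation f g x₂ y := by
      refine ⟨⟨?_, ?_, ?_⟩, ha.2⟩
      · intro w
        by_cases hwu : w = u
        · subst hwu
          rw [hx₂u]
          linarith [hdm.f_nonneg ({w} : Finset V)]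
        by_cases hwv : w = v
        · subst hwv
          rw [hx₂v]
          linarith [hxv w]
        · rw [hx₂w w hwu hwv]; exact hxv w
      · rw [hx₂, sum_shift x u v (-ε) ε Finset.univ]
        rw [if_pos (Finset.mem_univ u), if_pos (Finset.mem_univ v)]
        rw [ha.1.2.1]
        ring
      · intro A
        rw [hx₂, sum_shift x u v (-ε) ε A]
        have hbase := ha.1.2.2 A
        by_cases huA : u ∈ A
        · by_cases hvA : v ∈ A
          · rw [if_pos huA, if_pos hvA]; linarith
          · rw [if_pos huA, if_neg hvA]
            have := hεA A ((h𝒜mem A).2 ⟨huA, hvA⟩)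
            linarith
        · by_cases hvA : v ∈ A
          · rw [if_neg huA, if_pos hvA]; linarith
          · rw [if_neg huA, if_neg hvA]; linarith
    have himp : sortedDensities x₂ y < sortedDensities x y := by
      apply lex_improve u v huv
      · intro w hwu hwv
        rw [hx₂w w hwu hwv]
      · rw [hx₂u]
        apply (div_lt_div_iff_of_pos_right (hyv u)).2
        linarith
      · have h1 : d v < ρ := hdv
        have h2 : ρ ≤ d u := (hmemT u).1 huT
        rw [hd] at h1 h2
        linarith
      · rw [hx₂v]
        have h2 : ρ ≤ d u := (hmemT u).1 huT
        rw [hd] at h2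
        have h3 : (x v + ε) / y v < ρ := by
          rw [div_lt_iff₀ (hyv v)]
          have : ε ≤ (ρ * y v - x v)/2 := min_le_right _ _
          linarith
        linarith
    have := hmin x₂ y halloc₂
    exact absurd (lt_of_le_of_lt this himp) (lt_irrefl _)
  have hyT : ∑ v ∈ T, y v = g T := by
    by_contra hne
    obtain ⟨u, huT, v, hvT, hblock⟩ := exists_blocking_pair
      (fun A => ∑ w ∈ A, y w = g A) T ha.2.2.1 (by simp [hdm.g_empty])
      (fun A B hA hB => (g_tight_closed hdm ha.2 A B hA hB).1)
      (fun A B hA hB => (g_tight_closed hdm ha.2 A B hA hB).2) hne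
    have hslack : ∀ A : Finset V, u ∈ A → v ∉ A → ∑ w ∈ A, y w < g A :=
      fun A hu hv => lt_of_le_of_ne (ha.2.2.2 A) (fun hcon => hblock A hu hv hcon)
    have huv : u ≠ v := fun hcon => hvT (hcon ▸ huT)
    set 𝒜 := (Finset.univ : Finset (Finset V)).filter (fun A => u ∈ A ∧ v ∉ A) with h𝒜
    have h𝒜mem : ∀ A, A ∈ 𝒜 ↔ (u ∈ A ∧ v ∉ A) := by
      intro A; rw [h𝒜, Finset.mem_filter]; simp
    have h𝒜ne : 𝒜.Nonempty := ⟨{u}, (h𝒜mem {u}).2 ⟨Finset.mem_singleton_self u,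
      fun hcon => huv (Finset.mem_singleton.1 hcon).symm⟩⟩
    obtain ⟨A₀, hA₀, hminA⟩ := Finset.exists_min_image 𝒜 (fun A => g A - ∑ w ∈ A, y w) h𝒜ne
    have hdv : d v < ρ := by
      by_contra hcon
      exact hvT ((hmemT v).2 (not_lt.1 hcon))
    have hxvρ : x v < ρ * y v := by
      rw [hd] at hdv
      calc x v = (x v / y v) * y v := by field_simp [ne_of_gt (hyv v)]
        _ < ρ * y v := mul_lt_mul_of_pos_right hdv (hyv v)
    have hxvρ' : x v / ρ < y v := by
      rw [div_lt_iff₀ hρpos]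
      calc x v < ρ * y v := hxvρ
        _ = y v * ρ := by ring
    set ε := min (g A₀ - ∑ w ∈ A₀, y w) (min (y v / 2) ((y v - x v / ρ)/2)) with hε
    have hεpos : 0 < ε := by
      apply lt_min
      · have := hslack A₀ ((h𝒜mem A₀).1 hA₀).1 ((h𝒜mem A₀).1 hA₀).2
        linarith
      · apply lt_min
        · linarith [hyv v]
        · linarith
    have hεA : ∀ A ∈ 𝒜, ε ≤ g A - ∑ w ∈ A, y w :=
      fun A hA => le_trans (min_le_left _ _) (hminA A hA)
    have hεv1 : ε ≤ y v / 2 := le_trans (min_le_right _ _) (min_le_left _ _)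
    have hεv2 : ε ≤ (y v - x v / ρ)/2 := le_trans (min_le_right _ _) (min_le_right _ _)
    set y₂ := fun w => y w + (if w = u then ε else 0) + (if w = v then -ε else 0) with hy₂
    have hy₂u : y₂ u = y u + ε := by rw [hy₂]; simp [huv]
    have hy₂v : y₂ v = y v - ε := by rw [hy₂]; simp [Ne.symm huv]; ring
    have hy₂w : ∀ w, w ≠ u → w ≠ v → y₂ w = y w := by
      intro w hwu hwv; rw [hy₂]; simp [hwu, hwv]
    have hy₂vpos : 0 < y₂ v := by
      rw [hy₂v]
      linarith [hyv v]
    have halloc₂ : Allocation f g x y₂ := by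
      refine ⟨ha.1, ?_, ?_, ?_⟩
      · intro w
        by_cases hwu : w = u
        · subst hwu
          rw [hy₂u]
          linarith [hyv w]
        by_cases hwv : w = v
        · subst hwv
          exact le_of_lt hy₂vpos
        · rw [hy₂w w hwu hwv]; exact le_of_lt (hyv w)
      · rw [hy₂, sum_shift y u v ε (-ε) Finset.univ]
        rw [if_pos (Finset.mem_univ u), if_pos (Finset.mem_univ v)]
        rw [ha.2.2.1]
        ring
      · intro A
        rw [hy₂, sum_shift y u v ε (-ε) A]
        have hbase := ha.2.2.2 A
        by_cases huA : u ∈ A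
        · by_cases hvA : v ∈ A
          · rw [if_pos huA, if_pos hvA]; linarith
          · rw [if_pos huA, if_neg hvA]
            have := hεA A ((h𝒜mem A).2 ⟨huA, hvA⟩)
            linarith
        · by_cases hvA : v ∈ A
          · rw [if_neg huA, if_pos hvA]; linarith [hεpos]
          · rw [if_neg huA, if_neg hvA]; linarith
    have hxupos : 0 < x u := by
      have h2 : ρ ≤ d u := (hmemT u).1 huT
      rw [hd] at h2
      have h3 : ρ * y u ≤ x u := (le_div_iff₀ (hyv u)).1 h2
      nlinarith [hyv u, hρpos]
    have himp : sortedDensities x y₂ < sortedDensities x y := by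
      apply lex_improve u v huv
      · intro w hwu hwv
        rw [hy₂w w hwu hwv]
      · rw [hy₂u]
        apply div_lt_div_of_pos_left hxupos (hyv u)
        linarith
      · have h1 : d v < ρ := hdv
        have h2 : ρ ≤ d u := (hmemT u).1 huT
        rw [hd] at h1 h2
        linarith
      · rw [hy₂v]
        have h2 : ρ ≤ d u := (hmemT u).1 huT
        rw [hd] at h2
        have hden : x v / ρ < y v - ε := by linarith
        have hdenpos : 0 < y v - ε := lt_of_le_of_lt (div_nonneg (hxv v) (le_of_lt hρpos)) hden
        have h3 : x v / (y v - ε) < ρ := by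
          rw [div_lt_iff₀ hdenpos]
          calc x v = (x v / ρ) * ρ := by field_simp [ne_of_gt hρpos]
            _ < (y v - ε) * ρ := mul_lt_mul_of_pos_right hden hρpos
            _ = ρ * (y v - ε) := by ring
        linarith
    have := hmin x y₂ halloc₂
    exact absurd (lt_of_le_of_lt this himp) (lt_irrefl _)
  exact ⟨hxT, hyT⟩

end Exchange

end MFEaux

/-- Theorem 1.1: for an allocation, inducing the decomposition densities,
lexicographic optimality and the locally maximin condition are all equivalent. -/
theorem market_fairness_equivalence (f g : Finset V → ℝ) (hdm : DualModular f g)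
    {k : ℕ} (S : Fin k → Finset V) (hdec : IsDensityDecomposition f g S)
    (ρstar : V → ℝ) (hρ : ∀ i : Fin k, ∀ v ∈ S i, ρstar v = decompDensity f g S i)
    (x y : V → ℝ) (halloc : Allocation f g x y) :
    ((∀ v : V, x v / y v = ρstar v) ↔ LexOptimal f g x y) ∧
    (LexOptimal f g x y ↔ LocallyMaximin f g x y) := by
  have hI_II : (∀ v : V, x v / y v = ρstar v) → LexOptimal f g x y :=
    fun h => ⟨halloc, fun x' y' ha' => MFEaux.lex_min hdm hdec hρ h ha'⟩
  have hII_III : LexOptimal f g x y → LocallyMaximin f g x y :=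
    fun h => MFEaux.lexopt_implies_maximin hdm h
  have hIII_I : LocallyMaximin f g x y → (∀ v : V, x v / y v = ρstar v) :=
    fun h => MFEaux.maximin_implies_density hdm hdec hρ halloc h
  exact ⟨⟨hI_II, fun h => hIII_I (hII_III h)⟩,
    ⟨hII_III, fun h => hI_II (hIII_I h)⟩⟩
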